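/- For every positive integer r and every tree T with a vertex-marking function m : V(T) → {0,1}, if T has at least 2r marked vertices, then for every vertex v of T there exist subtrees T₁ and T₂ of T such that (E(T₁), E(T₂)) is a partition of E(T), v ∈ V(T₂), and the number of marked vertices lying in T₁ but assigned to T₁ (under any assignment of marked vertices to exactly one of the two subtrees containing them) is between r and 2r. -/

import Mathlib

set_option linter.unusedSectionVars false

open SimpleGraph

namespace TreeSplitAux

variable {V : Type} [Fintype V] [DecidableEq V] {T : SimpleGraph V}

/-- The set of vertices on the `b`-side of the edge `ab`. -/
def side (T : SimpleGraph V) (a b : V) : Set V :=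
  {w | (T.deleteEdges {s(a, b)}).Reachable b w}

lemma self_mem_side {a b : V} : b ∈ side T a b := Reachable.refl b

lemma not_reach_of_bridge (hT : T.IsAcyclic) (h : T.Adj a b) :
    ¬ (T.deleteEdges {s(a, b)}).Reachable a b := by
  have hb := (isAcyclic_iff_forall_adj_isBridge.mp hT) h
  rw [isBridge_iff] at hb
  exact hb

lemma not_mem_side (hT : T.IsAcyclic) (h : T.Adj a b) : a ∉ side T a b := by
  intro hx
  exact not_reach_of_bridge hT h hx.symm

lemma side_symm_graph (a b : V) :
    T.deleteEdges {s(b, a)} = T.deleteEdges {s(a, b)} := by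
  rw [Sym2.eq_swap]

lemma disjoint_side_side (hT : T.IsAcyclic) (h : T.Adj a b) :
    Disjoint (side T a b) (side T b a) := by
  rw [Set.disjoint_left]
  intro w hw1 hw2
  rw [side, Set.mem_setOf_eq, side_symm_graph] at hw2
  exact not_reach_of_bridge hT h (hw2.trans hw1.symm)

lemma mem_side_or (hT : T.IsTree) (h : T.Adj a b) (w : V) :
    w ∈ side T a b ∨ w ∈ side T b a := by
  have key : ∀ {x w : V}, T.Walk x w → x ∈ side T a b ∨ x ∈ side T b a →
      w ∈ side T a b ∨ w ∈ side T b a := by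
    intro x w p
    induction p with
    | nil => exact id
    | @cons x y w hxy q ih =>
      intro hx
      apply ih
      by_cases he : s(x, y) = s(a, b)
      · rw [Sym2.eq_iff] at he
        rcases he with ⟨rfl, rfl⟩ | ⟨rfl, rfl⟩
        · exact Or.inl self_mem_side
        · rw [side, Set.mem_setOf_eq, side_symm_graph]
          exact Or.inr self_mem_side
      · have hadj : (T.deleteEdges {s(a, b)}).Adj x y := by
          rw [deleteEdges_adj]
          exact ⟨hxy, by simpa using he⟩
        rcases hx with hx | hx
        · exact Or.inl (Reachable.trans hx hadj.reachable)
        · refine Or.inr ?_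
          rw [side, Set.mem_setOf_eq, side_symm_graph] at hx ⊢
          exact Reachable.trans hx hadj.reachable
  obtain ⟨p⟩ := hT.isConnected b w
  exact key p (Or.inl self_mem_side)

lemma walk_avoid {H : SimpleGraph V} {c w b x y : V} (hcw : H.Reachable c w)
    (hcb : ¬ H.Reachable c b) (hf : b = x ∨ b = y) :
    (H.deleteEdges {s(x, y)}).Reachable c w := by
  obtain ⟨p⟩ := hcw
  have hb : b ∉ p.support := fun hb => hcb ⟨p.takeUntil b hb⟩
  refine ⟨p.toDeleteEdges _ ?_⟩
  intro e he
  simp only [Set.mem_singleton_iff]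
  rintro rfl
  rcases hf with rfl | rfl
  · exact hb (p.fst_mem_support_of_mem_edges he)
  · exact hb (p.snd_mem_support_of_mem_edges he)

lemma side_subset_side (hT : T.IsTree) (hab : T.Adj a b) (hbc : T.Adj b c) (hca : c ≠ a) :
    side T b c ⊆ side T a b := by
  intro w hw
  have hcb : ¬ (T.deleteEdges {s(b, c)}).Reachable c b := fun h =>
    not_reach_of_bridge hT.IsAcyclic hbc h.symm
  have h2 : ((T.deleteEdges {s(b, c)}).deleteEdges {s(a, b)}).Reachable c w :=
    walk_avoid hw hcb (Or.inr rfl)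
  have hle : (T.deleteEdges {s(b, c)}).deleteEdges {s(a, b)} ≤ T.deleteEdges {s(a, b)} := by
    intro x y hxy
    simp only [deleteEdges_adj] at hxy ⊢
    exact ⟨hxy.1.1, hxy.2⟩
  have h3 : (T.deleteEdges {s(a, b)}).Reachable c w := h2.mono hle
  have hbc' : (T.deleteEdges {s(a, b)}).Adj b c := by
    rw [deleteEdges_adj]
    refine ⟨hbc, ?_⟩
    simp only [Set.mem_singleton_iff]
    intro h
    rw [Sym2.eq_iff] at h
    rcases h with ⟨h1, _⟩ | ⟨_, h2⟩
    · exact hab.ne h1.symm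
    · exact hca h2
  exact hbc'.reachable.trans h3

lemma exists_side (hT : T.IsTree) (u w : V) (hw : w ≠ u) :
    ∃ c, T.Adj u c ∧ w ∈ side T u c := by
  obtain ⟨p⟩ := hT.isConnected u w
  obtain ⟨q, hqp⟩ := p.toPath
  cases q with
  | nil => exact absurd rfl hw
  | @cons _ c _ h q' =>
    rw [Walk.cons_isPath_iff] at hqp
    refine ⟨c, h, ?_⟩
    refine ⟨q'.toDeleteEdges _ ?_⟩
    intro e he
    simp only [Set.mem_singleton_iff]
    rintro rfl
    exact hqp.2 (q'.fst_mem_support_of_mem_edges he)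

lemma disjoint_sides_at (hT : T.IsTree) (h1 : T.Adj u c) (h2 : T.Adj u c') (hne : c ≠ c') :
    Disjoint (side T u c) (side T u c') := by
  have hsub : side T u c' ⊆ side T c u := side_subset_side hT h1.symm h2 hne.symm
  exact (disjoint_side_side hT.IsAcyclic h1).mono_right hsub

/-- number of marked vertices in a set -/
noncomputable def mk (m : V → Bool) (A : Set V) : ℕ := (A ∩ {w | m w = true}).ncard

lemma mk_le_ncard {m : V → Bool} {A : Set V} : mk m A ≤ A.ncard :=
  Set.ncard_le_ncard Set.inter_subset_left (Set.toFinite _)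

lemma mk_union {m : V → Bool} {A B : Set V} (h : Disjoint A B) :
    mk m (A ∪ B) = mk m A + mk m B := by
  rw [mk, Set.union_inter_distrib_right,
    Set.ncard_union_eq (h.mono Set.inter_subset_left Set.inter_subset_left)
      (Set.toFinite _) (Set.toFinite _)]
  rfl

lemma mk_biUnion {m : V → Bool} (S : Finset V) (f : V → Set V)
    (hd : ∀ c ∈ S, ∀ c' ∈ S, c ≠ c' → Disjoint (f c) (f c')) :
    mk m (⋃ c ∈ S, f c) = ∑ c ∈ S, mk m (f c) := by
  induction S using Finset.induction with
  | empty => simp [mk]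
  | @insert a S ha ih =>
    rw [Finset.set_biUnion_insert, Finset.sum_insert ha,
      mk_union ?_, ih ?_]
    · intro c hc c' hc' hne
      exact hd c (Finset.mem_insert_of_mem hc) c' (Finset.mem_insert_of_mem hc') hne
    · rw [Set.disjoint_left]
      intro x hxa hxU
      simp only [Set.mem_iUnion] at hxU
      obtain ⟨c, hc, hxc⟩ := hxU
      have hne : a ≠ c := fun h => ha (h ▸ hc)
      exact Set.disjoint_left.mp
        (hd a (Finset.mem_insert_self a S) c (Finset.mem_insert_of_mem hc) hne) hxa hxc

lemma mk_singleton_le {m : V → Bool} (u : V) : mk m ({u} : Set V) ≤ 1 := by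
  have := mk_le_ncard (m := m) (A := ({u} : Set V))
  simpa using this

open Classical in
/-- The set of neighbours of `u`, as a finset. -/
noncomputable def nbrs (T : SimpleGraph V) (u : V) : Finset V :=
  Finset.univ.filter (fun c => T.Adj u c)

lemma mem_nbrs {u c : V} : c ∈ nbrs T u ↔ T.Adj u c := by
  simp [nbrs]

lemma univ_eq (hT : T.IsTree) (u : V) :
    (Set.univ : Set V) = {u} ∪ ⋃ c ∈ nbrs T u, side T u c := by
  ext w
  simp only [Set.mem_univ, true_iff, Set.mem_union, Set.mem_singleton_iff, Set.mem_iUnion]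
  by_cases hw : w = u
  · exact Or.inl hw
  · obtain ⟨c, hc, hwc⟩ := exists_side hT u w hw
    exact Or.inr ⟨c, mem_nbrs.mpr hc, hwc⟩

lemma side_eq (hT : T.IsTree) (hab : T.Adj a b) :
    side T a b = {b} ∪ ⋃ c ∈ (nbrs T b).erase a, side T b c := by
  ext w
  simp only [Set.mem_union, Set.mem_singleton_iff, Set.mem_iUnion]
  constructor
  · intro hw
    by_cases hwb : w = b
    · exact Or.inl hwb
    · obtain ⟨c, hc, hwc⟩ := exists_side hT b w hwb
      refine Or.inr ⟨c, ?_, hwc⟩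
      rw [Finset.mem_erase]
      refine ⟨?_, mem_nbrs.mpr hc⟩
      rintro rfl
      exact Set.disjoint_left.mp (disjoint_side_side hT.IsAcyclic hab) hw hwc
  · rintro (rfl | ⟨c, hc, hwc⟩)
    · exact self_mem_side
    · rw [Finset.mem_erase] at hc
      exact side_subset_side hT hab (mem_nbrs.mp hc.2) hc.1 hwc

lemma mk_univ_eq {m : V → Bool} (hT : T.IsTree) (u : V) :
    mk m Set.univ = mk m {u} + ∑ c ∈ nbrs T u, mk m (side T u c) := by
  rw [univ_eq hT u, mk_union, mk_biUnion]
  · intro c hc c' hc' hne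
    exact disjoint_sides_at hT (mem_nbrs.mp hc) (mem_nbrs.mp hc') hne
  · rw [Set.disjoint_left]
    rintro x rfl hxU
    simp only [Set.mem_iUnion] at hxU
    obtain ⟨c, hc, hxc⟩ := hxU
    exact not_mem_side hT.IsAcyclic (mem_nbrs.mp hc) hxc

lemma mk_side_eq {m : V → Bool} (hT : T.IsTree) (hab : T.Adj a b) :
    mk m (side T a b) = mk m {b} + ∑ c ∈ (nbrs T b).erase a, mk m (side T b c) := by
  rw [side_eq hT hab, mk_union, mk_biUnion]
  · intro c hc c' hc' hne
    rw [Finset.mem_erase] at hc hc'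
    exact disjoint_sides_at hT (mem_nbrs.mp hc.2) (mem_nbrs.mp hc'.2) hne
  · rw [Set.disjoint_left]
    rintro x rfl hxU
    simp only [Set.mem_iUnion] at hxU
    obtain ⟨c, hc, hxc⟩ := hxU
    rw [Finset.mem_erase] at hc
    exact not_mem_side hT.IsAcyclic (mem_nbrs.mp hc.2) hxc

lemma greedy {r : ℕ} (hr : 0 < r) (C : Finset V) (f : V → ℕ)
    (hf : ∀ c ∈ C, f c < r) (hsum : r ≤ ∑ c ∈ C, f c) :
    ∃ S ⊆ C, r ≤ ∑ c ∈ S, f c ∧ ∑ c ∈ S, f c < 2 * r := by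
  induction C using Finset.induction with
  | empty => simp at hsum; omega
  | @insert a C ha ih =>
    by_cases h : r ≤ ∑ c ∈ C, f c
    · obtain ⟨S, hS, h1, h2⟩ := ih (fun c hc => hf c (Finset.mem_insert_of_mem hc)) h
      exact ⟨S, hS.trans (Finset.subset_insert a C), h1, h2⟩
    · refine ⟨insert a C, Finset.Subset.rfl, hsum, ?_⟩
      rw [Finset.sum_insert ha]
      have h1 := hf a (Finset.mem_insert_self a C)
      omega

lemma step {m : V → Bool} {r : ℕ} (hT : T.IsTree) (hr : 0 < r) (v : V) :
    ∀ n : ℕ, ∀ (u : V) (C : Finset V), (∀ c ∈ C, T.Adj u c) → (∀ c ∈ C, v ∉ side T u c) →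
    (∀ c ∈ C, (side T u c).ncard ≤ n) → 2 * r ≤ ∑ c ∈ C, mk m (side T u c) →
    ∃ (u' : V) (S : Finset V), (∀ c ∈ S, T.Adj u' c) ∧ (∀ c ∈ S, v ∉ side T u' c) ∧
      r ≤ ∑ c ∈ S, mk m (side T u' c) ∧ ∑ c ∈ S, mk m (side T u' c) ≤ 2 * r := by
  intro n
  induction n with
  | zero =>
    intro u C h1 h2 h3 h4
    have hz : ∑ c ∈ C, mk m (side T u c) = 0 :=
      Finset.sum_eq_zero (fun c hc => Nat.le_zero.mp (mk_le_ncard.trans (h3 c hc)))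
    omega
  | succ n ih =>
    intro u C h1 h2 h3 h4
    by_cases hbig : ∑ c ∈ C, mk m (side T u c) ≤ 2 * r
    · exact ⟨u, C, h1, h2, le_trans (by omega) h4, hbig⟩
    push_neg at hbig
    by_cases hex : ∃ c ∈ C, r ≤ mk m (side T u c)
    · obtain ⟨c, hc, hcr⟩ := hex
      by_cases hc2 : mk m (side T u c) ≤ 2 * r
      · exact ⟨u, {c}, by simpa using h1 c hc, by simpa using h2 c hc,
          by simpa using hcr, by simpa using hc2⟩
      · push_neg at hc2
        set C' := (nbrs T c).erase u with hC'
        have hadjc := h1 c hc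
        have hAdj' : ∀ d ∈ C', T.Adj c d := by
          intro d hd
          rw [hC', Finset.mem_erase] at hd
          exact mem_nbrs.mp hd.2
        have hdu : ∀ d ∈ C', d ≠ u := by
          intro d hd
          rw [hC', Finset.mem_erase] at hd
          exact hd.1
        have hdec := mk_side_eq (m := m) hT hadjc
        have hsub : ∀ d ∈ C', side T c d ⊆ side T u c := fun d hd =>
          side_subset_side hT hadjc (hAdj' d hd) (hdu d hd)
        have hv' : ∀ d ∈ C', v ∉ side T c d := fun d hd h => h2 c hc (hsub d hd h)
        have hcard : ∀ d ∈ C', (side T c d).ncard ≤ n := by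
          intro d hd
          have hss : side T c d ⊂ side T u c := by
            rw [Set.ssubset_def]
            exact ⟨hsub d hd, fun hle =>
              not_mem_side hT.IsAcyclic (hAdj' d hd) (hle self_mem_side)⟩
          have hlt := Set.ncard_lt_ncard hss (Set.toFinite _)
          have h3c := h3 c hc
          omega
        have hsum' : 2 * r ≤ ∑ d ∈ C', mk m (side T c d) := by
          have hm1 := mk_singleton_le (m := m) c
          rw [hC']
          omega
        exact ih c C' hAdj' hv' hcard hsum'
    · push_neg at hex
      obtain ⟨S, hS, hg1, hg2⟩ := greedy hr C _ hex (le_trans (by omega) h4)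
      exact ⟨u, S, fun c hcS => h1 c (hS hcS), fun c hcS => h2 c (hS hcS), hg1, by omega⟩

lemma conn_reach {H : SimpleGraph V} (hle : H ≤ T) (b : V) :
    ((⊤ : T.Subgraph).induce {w | H.Reachable b w}).Connected := by
  set A := {w | H.Reachable b w} with hA
  have hb : b ∈ A := Reachable.refl b
  rw [Subgraph.connected_iff]
  have key : ∀ {x y : V} (p : H.Walk x y) (hx : x ∈ A),
      ((⊤ : T.Subgraph).induce A).coe.Reachable ⟨x, hx⟩ ⟨y, Reachable.trans hx ⟨p⟩⟩ := by
    intro x y p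
    induction p with
    | nil => intro hx; exact Reachable.refl _
    | @cons x y z hxy q ih =>
      intro hx
      have hy : y ∈ A := Reachable.trans hx hxy.reachable
      have hadj : ((⊤ : T.Subgraph).induce A).coe.Adj ⟨x, hx⟩ ⟨y, hy⟩ := by
        rw [Subgraph.coe_adj]
        exact ⟨hx, hy, by rw [Subgraph.top_adj]; exact hle hxy⟩
      exact hadj.reachable.trans (ih hy)
  refine ⟨⟨?_⟩, ⟨b, hb⟩⟩
  rintro ⟨x, hx⟩ ⟨y, hy⟩
  obtain ⟨p⟩ := (hx : H.Reachable b x)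
  obtain ⟨q⟩ := (hy : H.Reachable b y)
  exact (key p hb).symm.trans (key q hb)

lemma conn_pendant (hT : T.IsTree) (h : T.Adj u c) :
    ((⊤ : T.Subgraph).induce (side T u c ∪ {u})).Connected := by
  have hside : ((⊤ : T.Subgraph).induce (side T u c)).Connected :=
    conn_reach (deleteEdges_le _) c
  have hedge : (T.subgraphOfAdj h).Connected := Subgraph.subgraphOfAdj_connected h
  have hsup := Subgraph.connected_sup hedge.preconnected hside.preconnected ⟨c, Or.inr rfl, self_mem_side⟩
  apply hsup.mono
  · apply sup_le
    · constructor
      · rintro x (rfl | rfl)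
        · exact Or.inr rfl
        · exact Or.inl self_mem_side
      · intro x y hxy
        rw [subgraphOfAdj_adj] at hxy
        rw [Subgraph.induce_adj]
        rw [Sym2.eq_iff] at hxy
        rcases hxy with ⟨rfl, rfl⟩ | ⟨rfl, rfl⟩
        · exact ⟨Or.inr rfl, Or.inl self_mem_side, by rw [Subgraph.top_adj]; exact h⟩
        · exact ⟨Or.inl self_mem_side, Or.inr rfl, by rw [Subgraph.top_adj]; exact h.symm⟩
    · exact Subgraph.induce_mono_right Set.subset_union_left
  · show (({u, c} : Set V) ∪ side T u c) = side T u c ∪ {u}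
    ext x
    constructor
    · rintro ((rfl | rfl) | hx)
      · exact Or.inr rfl
      · exact Or.inl self_mem_side
      · exact Or.inl hx
    · rintro (hx | rfl)
      · exact Or.inr hx
      · exact Or.inl (Or.inl rfl)

lemma conn_glue (hT : T.IsTree) (u : V) (S : Finset V) (hS : ∀ c ∈ S, T.Adj u c) :
    ((⊤ : T.Subgraph).induce ({u} ∪ ⋃ c ∈ S, side T u c)).Connected := by
  induction S using Finset.induction with
  | empty =>
    have he : ({u} ∪ ⋃ c ∈ (∅ : Finset V), side T u c) = ({u} : Set V) := by simp
    rw [he]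
    refine Subgraph.Connected.mono (H := T.singletonSubgraph u) ?_ (by simp)
      Subgraph.singletonSubgraph_connected
    rw [singletonSubgraph_le_iff]
    exact Set.mem_singleton u
  | @insert c S hcS ih =>
    have hadc : T.Adj u c := hS c (Finset.mem_insert_self c S)
    have hP := conn_pendant hT hadc
    have hQ := ih (fun d hd => hS d (Finset.mem_insert_of_mem hd))
    have hsup := Subgraph.connected_sup hP.preconnected hQ.preconnected ⟨u, Or.inr rfl, Or.inl rfl⟩
    apply hsup.mono
    · apply sup_le
      · apply Subgraph.induce_mono_right
        rintro x (hx | rfl)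
        · exact Or.inr (Set.mem_biUnion (Finset.mem_insert_self c S) hx)
        · exact Or.inl rfl
      · apply Subgraph.induce_mono_right
        rintro x (rfl | hx)
        · exact Or.inl rfl
        · obtain ⟨d, hd, hxd⟩ := Set.mem_iUnion₂.mp hx
          exact Or.inr (Set.mem_biUnion (Finset.mem_insert_of_mem hd) hxd)
    · show ((side T u c ∪ {u}) ∪ ({u} ∪ ⋃ d ∈ S, side T u d))
          = {u} ∪ ⋃ d ∈ insert c S, side T u d
      ext x
      constructor
      · rintro ((hx | rfl) | (rfl | hx))
        · exact Or.inr (Set.mem_biUnion (Finset.mem_insert_self c S) hx)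
        · exact Or.inl rfl
        · exact Or.inl rfl
        · obtain ⟨d, hd, hxd⟩ := Set.mem_iUnion₂.mp hx
          exact Or.inr (Set.mem_biUnion (Finset.mem_insert_of_mem hd) hxd)
      · rintro (rfl | hx)
        · exact Or.inl (Or.inr rfl)
        · obtain ⟨d, hd, hxd⟩ := Set.mem_iUnion₂.mp hx
          rcases Finset.mem_insert.mp hd with rfl | hd
          · exact Or.inl (Or.inl hxd)
          · exact Or.inr (Or.inr (Set.mem_biUnion hd hxd))

lemma find {m : V → Bool} {r : ℕ} (hT : T.IsTree) (hr : 0 < r)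
    (hm : 2 * r ≤ mk m Set.univ) (v : V) :
    ∃ (u : V) (S : Finset V), (∀ c ∈ S, T.Adj u c) ∧ (∀ c ∈ S, v ∉ side T u c) ∧
      r ≤ ∑ c ∈ S, mk m (side T u c) ∧ ∑ c ∈ S, mk m (side T u c) ≤ 2 * r := by
  have hdec := mk_univ_eq (m := m) hT v
  have hm1 := mk_singleton_le (m := m) v
  by_cases h : 2 * r ≤ ∑ c ∈ nbrs T v, mk m (side T v c)
  · refine step hT hr v (Fintype.card V) v (nbrs T v)
      (fun c hc => mem_nbrs.mp hc)
      (fun c hc => not_mem_side hT.IsAcyclic (mem_nbrs.mp hc)) ?_ h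
    intro c hc
    simpa [Set.ncard_univ, Nat.card_eq_fintype_card] using
      Set.ncard_le_ncard (Set.subset_univ (side T v c)) (Set.toFinite _)
  · exact ⟨v, nbrs T v, fun c hc => mem_nbrs.mp hc,
      fun c hc => not_mem_side hT.IsAcyclic (mem_nbrs.mp hc), by omega, by omega⟩

lemma assemble {m : V → Bool} {r : ℕ} (hT : T.IsTree) (v u : V) (S : Finset V)
    (hadj : ∀ c ∈ S, T.Adj u c) (hv : ∀ c ∈ S, v ∉ side T u c)
    (h1 : r ≤ ∑ c ∈ S, mk m (side T u c)) (h2 : ∑ c ∈ S, mk m (side T u c) ≤ 2 * r) :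
    ∃ T₁ T₂ : T.Subgraph, T₁.Connected ∧ T₂.Connected ∧
      T₁.edgeSet ∪ T₂.edgeSet = T.edgeSet ∧ Disjoint T₁.edgeSet T₂.edgeSet ∧
      v ∈ T₂.verts ∧
      ∃ M₁ : Finset V, (∀ w ∈ M₁, m w = true ∧ w ∈ T₁.verts) ∧
        (∀ w, m w = true → w ∉ M₁ → w ∈ T₂.verts) ∧
        r ≤ M₁.card ∧ M₁.card ≤ 2 * r := by
  classical
  set U : Set V := ⋃ c ∈ S, side T u c with hU
  set S' : Finset V := (nbrs T u) \ S with hS'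
  set W : Set V := ⋃ c ∈ S', side T u c with hW
  have hadj' : ∀ c ∈ S', T.Adj u c := fun c hc => mem_nbrs.mp (Finset.mem_sdiff.mp hc).1
  have hS'S : ∀ c ∈ S', c ∉ S := fun c hc => (Finset.mem_sdiff.mp hc).2
  -- basic membership facts
  have f1 : ∀ w, w ∈ U → w ∈ W → False := by
    intro w hwU hwW
    obtain ⟨c, hc, hwc⟩ := Set.mem_iUnion₂.mp hwU
    obtain ⟨c', hc', hwc'⟩ := Set.mem_iUnion₂.mp hwW
    have hne : c ≠ c' := fun h => hS'S c' hc' (h ▸ hc)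
    exact Set.disjoint_left.mp
      (disjoint_sides_at hT (hadj c hc) (hadj' c' hc') hne) hwc hwc'
  have f2 : ∀ w, w ≠ u → w ∉ U → w ∈ W := by
    intro w hwu hwU
    obtain ⟨c, hc, hwc⟩ := exists_side hT u w hwu
    by_cases hcs : c ∈ S
    · exact absurd (Set.mem_biUnion hcs hwc) hwU
    · exact Set.mem_biUnion (Finset.mem_sdiff.mpr ⟨mem_nbrs.mpr hc, hcs⟩) hwc
  have f3 : u ∉ U := by
    intro h
    obtain ⟨c, hc, hwc⟩ := Set.mem_iUnion₂.mp h
    exact not_mem_side hT.IsAcyclic (hadj c hc) hwc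
  have f3' : u ∉ W := by
    intro h
    obtain ⟨c, hc, hwc⟩ := Set.mem_iUnion₂.mp h
    exact not_mem_side hT.IsAcyclic (hadj' c hc) hwc
  refine ⟨(⊤ : T.Subgraph).induce ({u} ∪ U), (⊤ : T.Subgraph).induce ({u} ∪ W),
    conn_glue hT u S hadj, conn_glue hT u S' hadj', ?_, ?_, ?_, ?_⟩
  · -- edge partition covers
    apply Set.eq_of_subset_of_subset
    · rintro e (he | he) <;>
      · revert he
        refine Sym2.ind (fun x y he => ?_) e
        rw [Subgraph.mem_edgeSet, Subgraph.induce_adj, Subgraph.top_adj] at he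
        exact he.2.2
    · intro e he
      revert he
      refine Sym2.ind (fun x y he => ?_) e
      rw [mem_edgeSet] at he
      by_cases hx : x = u
      · subst hx
        have hy : y ∈ side T x y := self_mem_side
        by_cases hys : y ∈ S
        · refine Or.inl ?_
          rw [Subgraph.mem_edgeSet, Subgraph.induce_adj, Subgraph.top_adj]
          exact ⟨Or.inl rfl, Or.inr (Set.mem_biUnion hys hy), he⟩
        · refine Or.inr ?_
          rw [Subgraph.mem_edgeSet, Subgraph.induce_adj, Subgraph.top_adj]
          exact ⟨Or.inl rfl, Or.inr (Set.mem_biUnion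
            (Finset.mem_sdiff.mpr ⟨mem_nbrs.mpr he, hys⟩) hy), he⟩
      · by_cases hyu : y = u
        · subst hyu
          have hx' : x ∈ side T y x := self_mem_side
          by_cases hxs : x ∈ S
          · refine Or.inl ?_
            rw [Subgraph.mem_edgeSet, Subgraph.induce_adj, Subgraph.top_adj]
            exact ⟨Or.inr (Set.mem_biUnion hxs hx'), Or.inl rfl, he⟩
          · refine Or.inr ?_
            rw [Subgraph.mem_edgeSet, Subgraph.induce_adj, Subgraph.top_adj]
            exact ⟨Or.inr (Set.mem_biUnion
              (Finset.mem_sdiff.mpr ⟨mem_nbrs.mpr he.symm, hxs⟩) hx'), Or.inl rfl, he⟩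
        · obtain ⟨c, hc, hxc⟩ := exists_side hT u x hx
          have hyc : y ∈ side T u c := by
            refine Reachable.trans hxc (Adj.reachable ?_)
            rw [deleteEdges_adj]
            refine ⟨he, ?_⟩
            simp only [Set.mem_singleton_iff]
            intro hh
            rw [Sym2.eq_iff] at hh
            rcases hh with ⟨rfl, _⟩ | ⟨_, rfl⟩
            · exact hx rfl
            · exact hyu rfl
          by_cases hcs : c ∈ S
          · refine Or.inl ?_
            rw [Subgraph.mem_edgeSet, Subgraph.induce_adj, Subgraph.top_adj]
            exact ⟨Or.inr (Set.mem_biUnion hcs hxc), Or.inr (Set.mem_biUnion hcs hyc), he⟩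
          · have hc' : c ∈ S' := Finset.mem_sdiff.mpr ⟨mem_nbrs.mpr hc, hcs⟩
            refine Or.inr ?_
            rw [Subgraph.mem_edgeSet, Subgraph.induce_adj, Subgraph.top_adj]
            exact ⟨Or.inr (Set.mem_biUnion hc' hxc), Or.inr (Set.mem_biUnion hc' hyc), he⟩
  · -- edge disjointness
    rw [Set.disjoint_left]
    intro e he1 he2
    revert he1 he2
    refine Sym2.ind (fun x y he1 he2 => ?_) e
    rw [Subgraph.mem_edgeSet, Subgraph.induce_adj, Subgraph.top_adj] at he1 he2
    have hxu : x = u := by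
      rcases he1.1 with rfl | hx1
      · rfl
      · rcases he2.1 with rfl | hx2
        · rfl
        · exact absurd hx2 (fun h => f1 x hx1 h)
    have hyu : y = u := by
      rcases he1.2.1 with rfl | hy1
      · rfl
      · rcases he2.2.1 with rfl | hy2
        · rfl
        · exact absurd hy2 (fun h => f1 y hy1 h)
    subst hxu hyu
    exact he1.2.2.ne rfl
  · -- v ∈ T₂.verts
    by_cases hvu : v = u
    · exact Or.inl hvu
    · refine Or.inr (f2 v hvu ?_)
      intro hvU
      obtain ⟨c, hc, hvc⟩ := Set.mem_iUnion₂.mp hvU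
      exact hv c hc hvc
  · -- the marked set
    refine ⟨(Set.toFinite (U ∩ {w | m w = true})).toFinset, ?_, ?_, ?_, ?_⟩
    · intro w hw
      rw [Set.Finite.mem_toFinset] at hw
      exact ⟨hw.2, Or.inr hw.1⟩
    · intro w hmw hw
      rw [Set.Finite.mem_toFinset] at hw
      by_cases hwu : w = u
      · exact Or.inl hwu
      · refine Or.inr (f2 w hwu ?_)
        intro hwU
        exact hw ⟨hwU, hmw⟩
    · have hcard : (Set.toFinite (U ∩ {w | m w = true})).toFinset.card = mk m U :=
        (Set.ncard_eq_toFinset_card _ _).symm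
      have hmkU : mk m U = ∑ c ∈ S, mk m (side T u c) :=
        mk_biUnion S _ (fun c hc c' hc' hne =>
          disjoint_sides_at hT (hadj c hc) (hadj c' hc') hne)
      omega
    · have hcard : (Set.toFinite (U ∩ {w | m w = true})).toFinset.card = mk m U :=
        (Set.ncard_eq_toFinset_card _ _).symm
      have hmkU : mk m U = ∑ c ∈ S, mk m (side T u c) :=
        mk_biUnion S _ (fun c hc c' hc' hne =>
          disjoint_sides_at hT (hadj c hc) (hadj c' hc') hne)
      omega

end TreeSplitAux

theorem stmt0 {V : Type} [Fintype V] [DecidableEq V] (r : ℕ) (hr : 0 < r)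
    (T : SimpleGraph V) (hT : T.IsTree) (m : V → Bool)
    (hm : 2 * r ≤ (Finset.univ.filter fun v => m v = true).card) :
    ∀ v : V, ∃ T₁ T₂ : T.Subgraph, T₁.Connected ∧ T₂.Connected ∧
      T₁.edgeSet ∪ T₂.edgeSet = T.edgeSet ∧ Disjoint T₁.edgeSet T₂.edgeSet ∧
      v ∈ T₂.verts ∧
      ∃ M₁ : Finset V, (∀ u ∈ M₁, m u = true ∧ u ∈ T₁.verts) ∧
        (∀ u, m u = true → u ∉ M₁ → u ∈ T₂.verts) ∧
        r ≤ M₁.card ∧ M₁.card ≤ 2 * r := by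
  intro v
  have hm' : 2 * r ≤ TreeSplitAux.mk m Set.univ := by
    rw [TreeSplitAux.mk, Set.univ_inter, Set.ncard_eq_toFinset_card']
    simpa [Set.toFinset_setOf] using hm
  obtain ⟨u, S, hadj, hv, h1, h2⟩ := TreeSplitAux.find hT hr hm' v
  exact TreeSplitAux.assemble hT v u S hadj hv h1 h2
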